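/- Let x_1, ..., x_n ∈ ℝ, let 1 ≤ m ≤ n with m dividing n, and let X_1, ..., X_m be drawn uniformly without replacement from {x_1, ..., x_n}. Let F_n be the empirical CDF of x_1, ..., x_n and F_{n,m} the empirical CDF of X_1, ..., X_m. Let s : (0,1) → [0,∞) be a bounded probability density, let u(t) := 1 for t ∈ (0,1) be the uniform density, and let 𝕃_s denote the L-functional with spectrum s. Then |E[𝕃_s[F_{n,m}]] − 𝕃_s[F_n]| ≤ ((n − m)/n) ‖s − u‖_∞ (x_{(n)} − x_{(1)}), where ‖s − u‖_∞ := sup_{t ∈ (0,1)} |s(t) − u(t)|, x_{(n)} = max_i x_i, x_{(1)} = min_i x_i, and the expectation is over the random sample. -/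

import Mathlib

open MeasureTheory

noncomputable instance {m n : ℕ} : Fintype (Fin m ↪ Fin n) := Function.Embedding.fintype

/-- Quantile function (generalized inverse CDF): `G⁻¹(t) = inf {z | G z ≥ t}`. -/
noncomputable def quantile (G : ℝ → ℝ) (t : ℝ) : ℝ := sInf {z : ℝ | t ≤ G z}

/-- Empirical CDF of the sample `Z 0, ..., Z (n-1)`. -/
noncomputable def empCDF {n : ℕ} (Z : Fin n → ℝ) (z : ℝ) : ℝ :=
  (∑ i, if Z i ≤ z then (1 : ℝ) else 0) / n

/-- L-functional with spectrum `s` applied to a CDF `G` : `𝕃ₛ[G] = ∫₀¹ s(t) G⁻¹(t) dt`. -/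
noncomputable def Lfun (s G : ℝ → ℝ) : ℝ :=
  ∫ t in Set.Ioo (0 : ℝ) 1, s t * quantile G t

namespace Stmt9Aux
open Finset

/-- the `i`-th subinterval of `(0,1]` of length `1/N`. -/
def ivl (N i : ℕ) : Set ℝ := Set.Ioc ((i : ℝ) / N) (((i : ℝ) + 1) / N)

lemma ivl_subset {N i : ℕ} (hN : 0 < N) (hi : i < N) : ivl N i ⊆ Set.Ioc (0 : ℝ) 1 := by
  have hN' : (0:ℝ) < N := by exact_mod_cast hN
  apply Set.Ioc_subset_Ioc
  · positivity
  · rw [div_le_one hN']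
    have : (i : ℝ) + 1 ≤ N := by exact_mod_cast hi
    linarith

lemma count_iff {N : ℕ} {w : Fin N → ℝ} (hw : Monotone w) (j : Fin N) (z : ℝ) :
    ((j : ℕ) + 1 ≤ (univ.filter (fun i => w i ≤ z)).card) ↔ w j ≤ z := by
  constructor
  · intro h
    by_contra hz
    push_neg at hz
    have hsub : univ.filter (fun i => w i ≤ z) ⊆ Finset.Iio j := by
      intro i hi
      simp only [mem_filter, mem_univ, true_and] at hi
      simp only [Finset.mem_Iio]
      by_contra hij
      push_neg at hij
      exact absurd (le_trans (hw hij) hi) (not_le.2 hz)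
    have := Finset.card_le_card hsub
    rw [Fin.card_Iio] at this
    omega
  · intro h
    have hsub : Finset.Iic j ⊆ univ.filter (fun i => w i ≤ z) := by
      intro i hi
      simp only [Finset.mem_Iic] at hi
      simp only [mem_filter, mem_univ, true_and]
      exact le_trans (hw hi) h
    have := Finset.card_le_card hsub
    rw [Fin.card_Iic] at this
    omega

/-- splitting an integral over `(a/N, b/N]` into unit subintervals. -/
lemma integral_split (f : ℝ → ℝ) {N : ℕ} (hN : (0:ℝ) < N) (a : ℕ) :
    ∀ b, a ≤ b → (∀ i, a ≤ i → i < b → IntegrableOn f (ivl N i)) →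
    IntegrableOn f (Set.Ioc ((a:ℝ)/N) ((b:ℝ)/N)) ∧
      ∫ t in Set.Ioc ((a:ℝ)/N) ((b:ℝ)/N), f t = ∑ i ∈ Finset.Ico a b, ∫ t in ivl N i, f t := by
  intro b
  induction b with
  | zero =>
    intro hab _
    have : a = 0 := Nat.le_zero.mp hab
    subst this
    simp [Set.Ioc_self]
  | succ b ih =>
    intro hab hint
    rcases Nat.lt_or_ge a (b+1) with hlt | hge
    · have hab' : a ≤ b := by omega
      obtain ⟨ih1, ih2⟩ := ih hab' (fun i h1 h2 => hint i h1 (by omega))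
      have hc : ((b+1:ℕ):ℝ) = (b:ℝ) + 1 := by push_cast; ring
      have hend : ((a:ℝ)/N) ≤ ((b:ℝ)/N) := by gcongr
      have hend2 : ((b:ℝ)/N) ≤ ((b:ℝ)+1)/N := by gcongr; linarith
      have htop : IntegrableOn f (ivl N b) := hint b hab' (by omega)
      have hun : Set.Ioc ((a:ℝ)/N) (((b:ℝ)+1)/N)
          = Set.Ioc ((a:ℝ)/N) ((b:ℝ)/N) ∪ ivl N b :=
        (Set.Ioc_union_Ioc_eq_Ioc hend hend2).symm
      rw [hc, hun]
      constructor
      · exact ih1.union htop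
      · rw [show ivl N b = Set.Ioc ((b:ℝ)/N) (((b:ℝ)+1)/N) from rfl,
          setIntegral_union (Set.Ioc_disjoint_Ioc_of_le le_rfl) measurableSet_Ioc ih1 htop, ih2,
          Finset.sum_Ico_succ_top hab']
        rfl
    · have : a = b + 1 := by omega
      subst this
      simp [Set.Ioc_self]

lemma quantile_empCDF {N : ℕ} [NeZero N] (Z : Fin N → ℝ) (j : Fin N) {t : ℝ}
    (ht : t ∈ ivl N (j : ℕ)) :
    quantile (empCDF Z) t = (Z ∘ Tuple.sort Z) j := by
  have hN : (0:ℝ) < N := by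
    have := Nat.pos_of_ne_zero (NeZero.ne N); exact_mod_cast this
  set w := Z ∘ Tuple.sort Z with hw_def
  have hw : Monotone w := Tuple.monotone_sort Z
  obtain ⟨ht1, ht2⟩ := ht
  have hset : {z : ℝ | t ≤ empCDF Z z} = Set.Ici (w j) := by
    ext z
    simp only [Set.mem_setOf_eq, Set.mem_Ici]
    rw [empCDF, le_div_iff₀ hN]
    have hcnt : (∑ i, if Z i ≤ z then (1:ℝ) else 0)
        = ((univ.filter (fun i => w i ≤ z)).card : ℝ) := by
      rw [← Finset.sum_boole]
      exact (Equiv.sum_comp (Tuple.sort Z) (fun i => if Z i ≤ z then (1:ℝ) else 0)).symm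
    rw [hcnt]
    constructor
    · intro h
      apply (count_iff hw j z).1
      rw [div_lt_iff₀ hN] at ht1
      have : (j : ℝ) < ((univ.filter (fun i => w i ≤ z)).card : ℝ) := lt_of_lt_of_le ht1 h
      exact_mod_cast this
    · intro h
      have hcard := (count_iff hw j z).2 h
      rw [le_div_iff₀ hN] at ht2
      have h2 : ((j:ℕ) : ℝ) + 1 ≤ ((univ.filter (fun i => w i ≤ z)).card : ℝ) := by
        exact_mod_cast hcard
      calc t * N ≤ (j:ℝ) + 1 := ht2
        _ ≤ _ := h2
  rw [quantile, hset, csInf_Ici]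

lemma Lfun_empCDF {N : ℕ} [NeZero N] {s : ℝ → ℝ} (hs : IntegrableOn s (Set.Ioc 0 1))
    (Z : Fin N → ℝ) :
    Lfun s (empCDF Z) = ∑ j : Fin N, (∫ t in ivl N (j:ℕ), s t) * (Z ∘ Tuple.sort Z) j := by
  have hNpos : 0 < N := Nat.pos_of_ne_zero (NeZero.ne N)
  have hN : (0:ℝ) < N := by exact_mod_cast hNpos
  have hpiece : ∀ j : Fin N,
      IntegrableOn (fun t => s t * quantile (empCDF Z) t) (ivl N (j:ℕ)) ∧
      ∫ t in ivl N (j:ℕ), s t * quantile (empCDF Z) t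
        = (∫ t in ivl N (j:ℕ), s t) * (Z ∘ Tuple.sort Z) j := by
    intro j
    have hsub : ivl N (j:ℕ) ⊆ Set.Ioc (0:ℝ) 1 := ivl_subset hNpos j.isLt
    have hsj : IntegrableOn s (ivl N (j:ℕ)) := hs.mono_set hsub
    have heq : Set.EqOn (fun t => s t * (Z ∘ Tuple.sort Z) j)
        (fun t => s t * quantile (empCDF Z) t) (ivl N (j:ℕ)) := by
      intro t ht
      simp only
      rw [quantile_empCDF Z j ht]
    constructor
    · exact MeasureTheory.IntegrableOn.congr_fun
        (hsj.mul_const ((Z ∘ Tuple.sort Z) j)) heq measurableSet_Ioc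
    · exact (setIntegral_congr_fun measurableSet_Ioc heq.symm).trans (integral_mul_const _ s)
  have hint : ∀ i, 0 ≤ i → i < N →
      IntegrableOn (fun t => s t * quantile (empCDF Z) t) (ivl N i) := by
    intro i _ hi
    exact (hpiece ⟨i, hi⟩).1
  obtain ⟨_, hsum⟩ := integral_split (fun t => s t * quantile (empCDF Z) t) hN 0 N
    (Nat.zero_le N) hint
  have h01 : Set.Ioc (((0:ℕ):ℝ)/N) (((N:ℕ):ℝ)/N) = Set.Ioc (0:ℝ) 1 := by
    rw [Nat.cast_zero, zero_div, div_self hN.ne']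
  rw [Lfun, setIntegral_congr_set MeasureTheory.Ioo_ae_eq_Ioc, ← h01, hsum,
    ← Finset.range_eq_Ico,
    ← Fin.sum_univ_eq_sum_range (fun i => ∫ t in ivl N i, s t * quantile (empCDF Z) t) N]
  exact Finset.sum_congr rfl fun j _ => (hpiece j).2

lemma Lfun_decomp {N : ℕ} [NeZero N] {s : ℝ → ℝ} (hs : IntegrableOn s (Set.Ioc 0 1))
    (Z : Fin N → ℝ) :
    Lfun s (empCDF Z)
      = (∑ j : Fin N, (∫ t in ivl N (j:ℕ), (s t - 1)) * (Z ∘ Tuple.sort Z) j)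
        + (∑ i, Z i) / N := by
  have hNpos : 0 < N := Nat.pos_of_ne_zero (NeZero.ne N)
  have hN : (0:ℝ) < N := by exact_mod_cast hNpos
  rw [Lfun_empCDF hs Z]
  have hterm : ∀ j : Fin N, (∫ t in ivl N (j:ℕ), s t)
      = (∫ t in ivl N (j:ℕ), (s t - 1)) + 1/N := by
    intro j
    have hsj : IntegrableOn s (ivl N (j:ℕ)) := hs.mono_set (ivl_subset hNpos j.isLt)
    have hconst : IntegrableOn (fun _ : ℝ => (1:ℝ)) (ivl N (j:ℕ)) :=
      integrableOn_const measure_Ioc_lt_top.ne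
    have hsub : ∫ t in ivl N (j:ℕ), (s t - 1)
        = (∫ t in ivl N (j:ℕ), s t) - ∫ t in ivl N (j:ℕ), (1:ℝ) :=
      integral_sub hsj hconst
    have hlen : ∫ t in ivl N (j:ℕ), (1:ℝ) = 1/N := by
      rw [show ivl N (j:ℕ) = Set.Ioc (((j:ℕ):ℝ)/N) ((((j:ℕ):ℝ)+1)/N) from rfl,
        setIntegral_const, smul_eq_mul, mul_one,
        Real.volume_real_Ioc_of_le (by gcongr; linarith)]
      field_simp
      ring
    rw [hsub, hlen]
    ring
  rw [Finset.sum_congr rfl (fun j _ => by rw [hterm j])]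
  have hdist : ∀ j : Fin N, ((∫ t in ivl N (j:ℕ), (s t - 1)) + 1/N) * (Z ∘ Tuple.sort Z) j
      = (∫ t in ivl N (j:ℕ), (s t - 1)) * (Z ∘ Tuple.sort Z) j
        + (1/N) * (Z ∘ Tuple.sort Z) j := fun j => by ring
  rw [Finset.sum_congr rfl (fun j _ => hdist j), Finset.sum_add_distrib, ← Finset.mul_sum]
  congr 1
  rw [show (∑ j, (Z ∘ Tuple.sort Z) j) = ∑ j, Z j from Equiv.sum_comp (Tuple.sort Z) Z]
  ring

lemma ind_eq (a b : ℝ) :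
    (fun z => |(if a ≤ z then (1:ℝ) else 0) - (if b ≤ z then (1:ℝ) else 0)|)
      = Set.indicator (Set.Ico (a ⊓ b) (a ⊔ b)) (fun _ => (1:ℝ)) := by
  funext z
  by_cases h1 : a ≤ z <;> by_cases h2 : b ≤ z
  · simp [h1, h2, Set.indicator_apply, Set.mem_Ico, not_lt.2 (sup_le h1 h2)]
  · simp [h1, h2, Set.indicator_apply, Set.mem_Ico, inf_le_left.trans h1,
      lt_of_lt_of_le (not_le.1 h2) le_sup_right]
  · simp [h1, h2, Set.indicator_apply, Set.mem_Ico, inf_le_right.trans h2,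
      lt_of_lt_of_le (not_le.1 h1) le_sup_left]
  · simp [h1, h2, Set.indicator_apply, Set.mem_Ico,
      not_le.2 (lt_inf_iff.2 ⟨not_le.1 h1, not_le.1 h2⟩)]

lemma ind_integrable (a b lo hi : ℝ) : IntegrableOn
    (fun z => |(if a ≤ z then (1:ℝ) else 0) - (if b ≤ z then (1:ℝ) else 0)|)
    (Set.Ico lo hi) := by
  rw [ind_eq]
  exact (integrableOn_const measure_Ico_lt_top.ne).indicator measurableSet_Ico

lemma abs_eq_integral {a b lo hi : ℝ} (ha : lo ≤ a) (ha' : a ≤ hi) (hb : lo ≤ b) (hb' : b ≤ hi) :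
    ∫ z in Set.Ico lo hi, |(if a ≤ z then (1:ℝ) else 0) - (if b ≤ z then (1:ℝ) else 0)|
      = |a - b| := by
  rw [show (fun z => |(if a ≤ z then (1:ℝ) else 0) - (if b ≤ z then (1:ℝ) else 0)|)
      = Set.indicator (Set.Ico (a ⊓ b) (a ⊔ b)) (fun _ => (1:ℝ)) from ind_eq a b]
  rw [setIntegral_indicator measurableSet_Ico,
    Set.inter_eq_self_of_subset_right (Set.Ico_subset_Ico (le_inf ha hb) (sup_le ha' hb')),
    setIntegral_const, smul_eq_mul, mul_one,
    Real.volume_real_Ico_of_le inf_le_sup]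
  exact (max_sub_min_eq_abs a b).trans (abs_sub_comm b a)

lemma sum_abs_sub {N : ℕ} {a b : Fin N → ℝ} (h : ∀ i, a i ≤ b i) :
    ∑ i, |a i - b i| = |∑ i, a i - ∑ i, b i| := by
  calc ∑ i, |a i - b i| = ∑ i, (b i - a i) :=
        Finset.sum_congr rfl fun i _ => by
          rw [abs_sub_comm, abs_of_nonneg (sub_nonneg.2 (h i))]
    _ = (∑ i, b i) - ∑ i, a i := Finset.sum_sub_distrib _ _
    _ = |∑ i, a i - ∑ i, b i| := by
        rw [abs_sub_comm, abs_of_nonneg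
          (sub_nonneg.2 (Finset.sum_le_sum fun i _ => h i))]

lemma same_sign {N : ℕ} {Y X : Fin N → ℝ} (hY : Monotone Y) (hX : Monotone X) (z : ℝ) :
    ∑ i, |(if Y i ≤ z then (1:ℝ) else 0) - (if X i ≤ z then (1:ℝ) else 0)|
      = |(∑ i, if Y i ≤ z then (1:ℝ) else 0) - (∑ i, if X i ≤ z then (1:ℝ) else 0)| := by
  have hcomp : (∀ i, Y i ≤ z → X i ≤ z) ∨ (∀ i, X i ≤ z → Y i ≤ z) := by
    by_contra h
    push_neg at h
    obtain ⟨⟨i, hYi, hXi⟩, ⟨i', hXi', hYi'⟩⟩ := h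
    rcases le_total i i' with hii | hii
    · exact absurd (le_trans (hX hii) hXi') (not_le.2 hXi)
    · exact absurd (le_trans (hY hii) hYi) (not_le.2 hYi')
  rcases hcomp with h | h
  · exact sum_abs_sub fun i => by
      by_cases h1 : Y i ≤ z
      · simp [h1, h i h1]
      · simp only [h1, if_false]
        split <;> norm_num
  · have key := sum_abs_sub (a := fun i => if X i ≤ z then (1:ℝ) else 0)
      (b := fun i => if Y i ≤ z then (1:ℝ) else 0) (fun i => by
        by_cases h1 : X i ≤ z
        · simp [h1, h i h1]
        · simp only [h1, if_false]
          split <;> norm_num)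
    calc ∑ i, |(if Y i ≤ z then (1:ℝ) else 0) - (if X i ≤ z then (1:ℝ) else 0)|
        = ∑ i, |(if X i ≤ z then (1:ℝ) else 0) - (if Y i ≤ z then (1:ℝ) else 0)| :=
          Finset.sum_congr rfl fun i _ => abs_sub_comm _ _
      _ = |(∑ i, if X i ≤ z then (1:ℝ) else 0) - (∑ i, if Y i ≤ z then (1:ℝ) else 0)| := key
      _ = _ := abs_sub_comm _ _

lemma sorted_l1 {N : ℕ} [NeZero N] {Y X : Fin N → ℝ} (hY : Monotone Y) (hX : Monotone X)
    {lo hi D : ℝ} (hYlo : ∀ i, lo ≤ Y i) (hYhi : ∀ i, Y i ≤ hi)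
    (hXlo : ∀ i, lo ≤ X i) (hXhi : ∀ i, X i ≤ hi)
    (hD : ∀ z : ℝ, |(∑ i, if Y i ≤ z then (1:ℝ) else 0)
      - (∑ i, if X i ≤ z then (1:ℝ) else 0)| ≤ D) :
    ∑ i, |Y i - X i| ≤ D * (hi - lo) := by
  have i0 : Fin N := ⟨0, Nat.pos_of_ne_zero (NeZero.ne N)⟩
  have hlohi : lo ≤ hi := (hYlo i0).trans (hYhi i0)
  calc ∑ i, |Y i - X i|
      = ∑ i, ∫ z in Set.Ico lo hi,
          |(if Y i ≤ z then (1:ℝ) else 0) - (if X i ≤ z then (1:ℝ) else 0)| :=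
        Finset.sum_congr rfl fun i _ =>
          (abs_eq_integral (hYlo i) (hYhi i) (hXlo i) (hXhi i)).symm
    _ = ∫ z in Set.Ico lo hi, ∑ i,
          |(if Y i ≤ z then (1:ℝ) else 0) - (if X i ≤ z then (1:ℝ) else 0)| :=
        (integral_finset_sum univ (fun i _ => ind_integrable (Y i) (X i) lo hi)).symm
    _ ≤ ∫ _z in Set.Ico lo hi, D := by
        apply setIntegral_mono_on
        · exact integrable_finset_sum univ (fun i _ => ind_integrable (Y i) (X i) lo hi)
        · exact integrableOn_const measure_Ico_lt_top.ne
        · exact measurableSet_Ico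
        · intro z _
          rw [same_sign hY hX z]
          exact hD z
    _ = D * (hi - lo) := by
        rw [setIntegral_const, smul_eq_mul,
          Real.volume_real_Ico_of_le hlohi, mul_comm]

lemma fib_const {m n : ℕ} (j : Fin m) (i i' : Fin n) :
    (univ.filter fun ι : Fin m ↪ Fin n => ι j = i).card
      = (univ.filter fun ι : Fin m ↪ Fin n => ι j = i').card := by
  classical
  apply Finset.card_bij' (i := fun ι _ => ι.trans (Equiv.swap i i').toEmbedding)
    (j := fun κ _ => κ.trans (Equiv.swap i i').toEmbedding)
  · intro ι _
    apply Function.Embedding.ext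
    intro a
    simp [Function.Embedding.trans_apply, Equiv.swap_apply_self]
  · intro κ _
    apply Function.Embedding.ext
    intro a
    simp [Function.Embedding.trans_apply, Equiv.swap_apply_self]
  · intro ι hι
    simp only [mem_filter, mem_univ, true_and] at hι ⊢
    rw [Function.Embedding.trans_apply, hι, Equiv.coe_toEmbedding, Equiv.swap_apply_left]
  · intro κ hκ
    simp only [mem_filter, mem_univ, true_and] at hκ ⊢
    rw [Function.Embedding.trans_apply, hκ, Equiv.coe_toEmbedding, Equiv.swap_apply_right]

lemma exp_mean {m n : ℕ} [NeZero n] (x : Fin n → ℝ) :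
    ∑ ι : Fin m ↪ Fin n, (∑ j, x (ι j))
      = (Fintype.card (Fin m ↪ Fin n) : ℝ) * (m : ℝ) * ((∑ i, x i) / n) := by
  classical
  have hnpos : 0 < n := Nat.pos_of_ne_zero (NeZero.ne n)
  have hnR : ((n:ℕ):ℝ) ≠ 0 := Nat.cast_ne_zero.2 hnpos.ne'
  have key : ∀ j : Fin m, ∑ ι : Fin m ↪ Fin n, x (ι j)
      = (Fintype.card (Fin m ↪ Fin n) : ℝ) * ((∑ i, x i) / n) := by
    intro j
    set i0 : Fin n := ⟨0, hnpos⟩ with hi0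
    set fib := (univ.filter fun ι : Fin m ↪ Fin n => ι j = i0).card with hfib
    have hcard : Fintype.card (Fin m ↪ Fin n) = n * fib := by
      have h1 : (univ : Finset (Fin m ↪ Fin n)).card
          = ∑ i : Fin n, (univ.filter fun ι : Fin m ↪ Fin n => ι j = i).card :=
        Finset.card_eq_sum_card_fiberwise (fun ι _ => mem_univ (ι j))
      rw [Finset.card_univ] at h1
      rw [h1, Finset.sum_congr rfl (fun i _ => fib_const j i i0), Finset.sum_const,
        Finset.card_univ, Fintype.card_fin, smul_eq_mul]
    have hsum : ∑ ι : Fin m ↪ Fin n, x (ι j) = (fib : ℝ) * ∑ i, x i := by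
      rw [← Finset.sum_fiberwise univ (fun ι : Fin m ↪ Fin n => ι j) (fun ι => x (ι j))]
      have hinner : ∀ i : Fin n,
          (∑ ι ∈ univ.filter (fun ι : Fin m ↪ Fin n => ι j = i), x (ι j))
            = (fib:ℝ) * x i := by
        intro i
        rw [Finset.sum_congr rfl (fun ι hι => by rw [(Finset.mem_filter.1 hι).2]),
          Finset.sum_const, fib_const j i i0, nsmul_eq_mul]
      rw [Finset.sum_congr rfl (fun i _ => hinner i), ← Finset.mul_sum]
    rw [hsum, hcard]
    push_cast
    field_simp
  rw [Finset.sum_comm, Finset.sum_congr rfl (fun j _ => key j), Finset.sum_const,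
    Finset.card_univ, Fintype.card_fin, nsmul_eq_mul]
  ring

lemma count_bound {m k : ℕ} (hm : 0 < m) (hk : 0 < k) (x : Fin (m*k) → ℝ)
    (ι : Fin m ↪ Fin (m*k)) (Zs : Fin m → ℝ)
    (hZs : ∀ z : ℝ, (∑ j, if Zs j ≤ z then (1:ℝ) else 0)
      = ∑ j, if x (ι j) ≤ z then (1:ℝ) else 0)
    (Xs : Fin (m*k) → ℝ)
    (hXs : ∀ z : ℝ, (∑ i, if Xs i ≤ z then (1:ℝ) else 0)
      = ∑ i, if x i ≤ z then (1:ℝ) else 0)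
    (z : ℝ) :
    |(∑ i : Fin (m*k), if Zs (finProdFinEquiv.symm i).1 ≤ z then (1:ℝ) else 0)
      - (∑ i, if Xs i ≤ z then (1:ℝ) else 0)| ≤ ((m*k : ℕ) : ℝ) - m := by
  classical
  set c : ℝ := ∑ j, if x (ι j) ≤ z then (1:ℝ) else 0 with hc
  set C : ℝ := ∑ i : Fin (m*k), if x i ≤ z then (1:ℝ) else 0 with hC
  have hYcnt : (∑ i : Fin (m*k), if Zs (finProdFinEquiv.symm i).1 ≤ z then (1:ℝ) else 0)
      = (k:ℝ) * c := by
    rw [← Equiv.sum_comp (finProdFinEquiv : Fin m × Fin k ≃ Fin (m*k))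
      (fun i => if Zs (finProdFinEquiv.symm i).1 ≤ z then (1:ℝ) else 0)]
    simp only [Equiv.symm_apply_apply]
    have hkc : ∀ j : Fin m, (∑ _r : Fin k, if Zs j ≤ z then (1:ℝ) else 0)
        = (k:ℝ) * (if Zs j ≤ z then (1:ℝ) else 0) := by
      intro j
      rw [Finset.sum_const, Finset.card_univ, Fintype.card_fin, nsmul_eq_mul]
    rw [Fintype.sum_prod_type, Finset.sum_congr rfl (fun j _ => hkc j), ← Finset.mul_sum,
      hZs z, ← hc]
  rw [hYcnt, hXs z, ← hC]
  have hc0 : 0 ≤ c := Finset.sum_nonneg fun j _ => by split <;> norm_num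
  have hcm : c ≤ (m:ℝ) := by
    calc c ≤ ∑ _j : Fin m, (1:ℝ) := Finset.sum_le_sum fun j _ => by split <;> norm_num
      _ = m := by simp
  have hmap : c = ∑ i ∈ univ.map ι, (if x i ≤ z then (1:ℝ) else 0) :=
    (Finset.sum_map univ ι (fun i => if x i ≤ z then (1:ℝ) else 0)).symm
  have hsdiff : (∑ i ∈ univ \ univ.map ι, (if x i ≤ z then (1:ℝ) else 0)) + c = C := by
    rw [hmap, hC]
    exact Finset.sum_sdiff (Finset.subset_univ _)
  have hrest0 : 0 ≤ ∑ i ∈ univ \ univ.map ι, (if x i ≤ z then (1:ℝ) else 0) :=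
    Finset.sum_nonneg fun i _ => by split <;> norm_num
  have hrest : (∑ i ∈ univ \ univ.map ι, (if x i ≤ z then (1:ℝ) else 0))
      ≤ ((m*k:ℕ):ℝ) - m := by
    calc (∑ i ∈ univ \ univ.map ι, (if x i ≤ z then (1:ℝ) else 0))
        ≤ ∑ _i ∈ univ \ univ.map ι, (1:ℝ) :=
          Finset.sum_le_sum fun i _ => by split <;> norm_num
      _ = ((univ \ univ.map ι).card : ℝ) := by rw [Finset.sum_const, nsmul_eq_mul, mul_one]
      _ = ((m*k:ℕ):ℝ) - m := by
          rw [Finset.card_sdiff_of_subset (Finset.subset_univ _), Finset.card_univ, Fintype.card_fin,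
            Finset.card_map, Finset.card_univ, Fintype.card_fin]
          have hmn : m ≤ m * k := Nat.le_mul_of_pos_right m hk
          push_cast [Nat.cast_sub hmn]
          ring
  have hcC : c ≤ C := by linarith
  have hCc : C - c ≤ ((m*k:ℕ):ℝ) - m := by linarith
  have hk1 : (1:ℝ) ≤ (k:ℝ) := by exact_mod_cast hk
  rw [abs_le]
  constructor
  · nlinarith
  · have hmk : ((m*k:ℕ):ℝ) = (m:ℝ) * k := by push_cast; ring
    nlinarith

lemma perSample {m k : ℕ} [NeZero m] [NeZero k] {s : ℝ → ℝ}
    (hs1Ioc : IntegrableOn (fun t => s t - 1) (Set.Ioc (0:ℝ) 1))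
    {M xmin xmax : ℝ}
    (hMb : ∀ t ∈ Set.Ioo (0:ℝ) 1, |s t - 1| ≤ M)
    (x : Fin (m*k) → ℝ) (hxlo : ∀ i, xmin ≤ x i) (hxhi : ∀ i, x i ≤ xmax)
    (ι : Fin m ↪ Fin (m*k)) :
    |(∑ j : Fin m, (∫ t in ivl m (j:ℕ), (s t - 1))
        * (((fun j => x (ι j)) ∘ Tuple.sort (fun j => x (ι j))) j))
      - ∑ i : Fin (m*k), (∫ t in ivl (m*k) (i:ℕ), (s t - 1)) * ((x ∘ Tuple.sort x) i)|
    ≤ (((m*k:ℕ):ℝ) - m) / ((m*k:ℕ):ℝ) * M * (xmax - xmin) := by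
  classical
  have hm : 0 < m := Nat.pos_of_ne_zero (NeZero.ne m)
  have hk : 0 < k := Nat.pos_of_ne_zero (NeZero.ne k)
  have hn : 0 < m * k := Nat.mul_pos hm hk
  haveI : NeZero (m*k) := ⟨hn.ne'⟩
  have hnR : (0:ℝ) < ((m*k:ℕ):ℝ) := by exact_mod_cast hn
  have hkR : ((k:ℕ):ℝ) ≠ 0 := by exact_mod_cast hk.ne'
  set Z : Fin m → ℝ := fun j => x (ι j) with hZ
  set w : Fin m → ℝ := Z ∘ Tuple.sort Z with hw
  set Xs : Fin (m*k) → ℝ := x ∘ Tuple.sort x with hXs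
  set e : Fin (m*k) → ℝ := fun i => ∫ t in ivl (m*k) (i:ℕ), (s t - 1) with he
  have hM0 : 0 ≤ M := le_trans (abs_nonneg _) (hMb (1/2) (by norm_num))
  have hpieceInt : ∀ i : ℕ, i < m*k → IntegrableOn (fun t => s t - 1) (ivl (m*k) i) :=
    fun i hi => hs1Ioc.mono_set (ivl_subset hn hi)
  -- bound on each coefficient
  have hEbound : ∀ i : Fin (m*k), |e i| ≤ M / ((m*k:ℕ):ℝ) := by
    intro i
    have hi := i.isLt
    have hi1 : ((i:ℕ):ℝ) + 1 ≤ ((m*k:ℕ):ℝ) := by exact_mod_cast hi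
    have hsub2 : Set.Ioo (((i:ℕ):ℝ)/((m*k:ℕ):ℝ)) ((((i:ℕ):ℝ)+1)/((m*k:ℕ):ℝ))
        ⊆ Set.Ioo (0:ℝ) 1 := by
      apply Set.Ioo_subset_Ioo
      · positivity
      · rw [div_le_one hnR]; exact hi1
    have heqI : e i = ∫ t in Set.Ioo (((i:ℕ):ℝ)/((m*k:ℕ):ℝ))
        ((((i:ℕ):ℝ)+1)/((m*k:ℕ):ℝ)), (s t - 1) :=
      (setIntegral_congr_set MeasureTheory.Ioo_ae_eq_Ioc).symm
    have hmeas : AEStronglyMeasurable (fun t => s t - 1)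
        (volume.restrict (Set.Ioo (((i:ℕ):ℝ)/((m*k:ℕ):ℝ)) ((((i:ℕ):ℝ)+1)/((m*k:ℕ):ℝ)))) :=
      ((hpieceInt i hi).mono_set Set.Ioo_subset_Ioc_self).1
    have hlen : ((((i:ℕ):ℝ)+1)/((m*k:ℕ):ℝ)) - (((i:ℕ):ℝ)/((m*k:ℕ):ℝ)) = 1/((m*k:ℕ):ℝ) := by
      field_simp
      ring
    calc |e i| ≤ M * (volume (Set.Ioo (((i:ℕ):ℝ)/((m*k:ℕ):ℝ))
          ((((i:ℕ):ℝ)+1)/((m*k:ℕ):ℝ)))).toReal := by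
          rw [heqI]
          exact norm_setIntegral_le_of_norm_le_const measure_Ioo_lt_top
            (fun t ht => (Real.norm_eq_abs _).trans_le (hMb t (hsub2 ht)))
      _ = M / ((m*k:ℕ):ℝ) := by
          rw [Real.volume_Ioo, ENNReal.toReal_ofReal (by rw [sub_nonneg]; gcongr; linarith),
            hlen]
          ring
  -- grouping of the coarse intervals
  have hgroup : ∀ j : Fin m, ∫ t in ivl m (j:ℕ), (s t - 1)
      = ∑ r : Fin k, e (finProdFinEquiv (j, r)) := by
    intro j
    have hj : (j:ℕ) + 1 ≤ m := j.isLt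
    have hjk : (j:ℕ)*k ≤ ((j:ℕ)+1)*k := Nat.mul_le_mul_right k (by omega)
    obtain ⟨_, hsplit⟩ := integral_split (fun t => s t - 1) hnR ((j:ℕ)*k) (((j:ℕ)+1)*k)
      hjk (fun i _ h2 => hpieceInt i (lt_of_lt_of_le h2 (Nat.mul_le_mul_right k hj)))
    have he1 : (((j:ℕ)*k : ℕ):ℝ)/((m*k:ℕ):ℝ) = ((j:ℕ):ℝ)/(m:ℝ) := by
      push_cast; rw [mul_div_mul_right _ _ hkR]
    have he2 : (((((j:ℕ)+1))*k : ℕ):ℝ)/((m*k:ℕ):ℝ) = (((j:ℕ):ℝ)+1)/(m:ℝ) := by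
      push_cast; rw [mul_div_mul_right _ _ hkR]
    have hivl : ivl m (j:ℕ) = Set.Ioc ((((j:ℕ)*k : ℕ):ℝ)/((m*k:ℕ):ℝ))
        (((((j:ℕ)+1)*k : ℕ):ℝ)/((m*k:ℕ):ℝ)) := by
      rw [he1, he2]; rfl
    rw [hivl, hsplit, Finset.sum_Ico_eq_sum_range,
      show ((j:ℕ)+1)*k - (j:ℕ)*k = k from by rw [add_one_mul]; omega,
      ← Fin.sum_univ_eq_sum_range (fun r => ∫ t in ivl (m*k) ((j:ℕ)*k + r), (s t - 1)) k]
    refine Finset.sum_congr rfl (fun r _ => ?_)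
    rw [show (j:ℕ)*k + (r:ℕ) = ((finProdFinEquiv (j,r) : Fin (m*k)) : ℕ) from by
      rw [finProdFinEquiv_apply_val]; ring]
  -- rewrite both sums over the product type
  have hA : (∑ j : Fin m, (∫ t in ivl m (j:ℕ), (s t - 1)) * w j)
      = ∑ p : Fin m × Fin k, e (finProdFinEquiv p) * w p.1 := by
    rw [Finset.sum_congr rfl (fun j _ => by rw [hgroup j, Finset.sum_mul])]
    exact (Fintype.sum_prod_type (fun p : Fin m × Fin k => e (finProdFinEquiv p) * w p.1)).symm
  have hAx : (∑ i : Fin (m*k), e i * Xs i)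
      = ∑ p : Fin m × Fin k, e (finProdFinEquiv p) * Xs (finProdFinEquiv p) :=
    (Equiv.sum_comp finProdFinEquiv (fun i => e i * Xs i)).symm
  -- the merged Y sequence
  have hwmono : Monotone w := Tuple.monotone_sort Z
  have hXmono : Monotone Xs := Tuple.monotone_sort x
  have hYmono : Monotone (fun i : Fin (m*k) => w (finProdFinEquiv.symm i).1) := by
    intro i i' hii
    apply hwmono
    simp only [finProdFinEquiv_symm_apply]
    rw [Fin.le_def, Fin.coe_divNat, Fin.coe_divNat]
    exact Nat.div_le_div_right hii
  have hZcnt : ∀ z : ℝ, (∑ j, if w j ≤ z then (1:ℝ) else 0)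
      = ∑ j, if Z j ≤ z then (1:ℝ) else 0 :=
    fun z => Equiv.sum_comp (Tuple.sort Z) (fun j => if Z j ≤ z then (1:ℝ) else 0)
  have hXcnt : ∀ z : ℝ, (∑ i, if Xs i ≤ z then (1:ℝ) else 0)
      = ∑ i, if x i ≤ z then (1:ℝ) else 0 :=
    fun z => Equiv.sum_comp (Tuple.sort x) (fun i => if x i ≤ z then (1:ℝ) else 0)
  have hcount : ∀ z : ℝ,
      |(∑ i : Fin (m*k), if w (finProdFinEquiv.symm i).1 ≤ z then (1:ℝ) else 0)
        - (∑ i, if Xs i ≤ z then (1:ℝ) else 0)| ≤ ((m*k : ℕ) : ℝ) - m :=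
    fun z => count_bound hm hk x ι w hZcnt Xs hXcnt z
  have hl1 : (∑ i : Fin (m*k), |w (finProdFinEquiv.symm i).1 - Xs i|)
      ≤ (((m*k:ℕ):ℝ) - m) * (xmax - xmin) := by
    apply sorted_l1 hYmono hXmono
      (fun i => hxlo _) (fun i => hxhi _) (fun i => hxlo _) (fun i => hxhi _) hcount
  calc |(∑ j : Fin m, (∫ t in ivl m (j:ℕ), (s t - 1)) * w j)
        - ∑ i : Fin (m*k), e i * Xs i|
      = |∑ p : Fin m × Fin k,
          (e (finProdFinEquiv p) * w p.1 - e (finProdFinEquiv p) * Xs (finProdFinEquiv p))| := by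
        rw [hA, hAx, ← Finset.sum_sub_distrib]
    _ = |∑ p : Fin m × Fin k,
          e (finProdFinEquiv p) * (w p.1 - Xs (finProdFinEquiv p))| := by
        rw [Finset.sum_congr rfl (fun p _ => (mul_sub (e (finProdFinEquiv p)) _ _).symm)]
    _ ≤ ∑ p : Fin m × Fin k, |e (finProdFinEquiv p) * (w p.1 - Xs (finProdFinEquiv p))| :=
        Finset.abs_sum_le_sum_abs _ _
    _ = ∑ p : Fin m × Fin k, |e (finProdFinEquiv p)| * |w p.1 - Xs (finProdFinEquiv p)| :=
        Finset.sum_congr rfl (fun p _ => abs_mul _ _)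
    _ ≤ ∑ p : Fin m × Fin k, (M / ((m*k:ℕ):ℝ)) * |w p.1 - Xs (finProdFinEquiv p)| :=
        Finset.sum_le_sum (fun p _ =>
          mul_le_mul_of_nonneg_right (hEbound _) (abs_nonneg _))
    _ = (M / ((m*k:ℕ):ℝ)) * ∑ p : Fin m × Fin k, |w p.1 - Xs (finProdFinEquiv p)| := by
        rw [← Finset.mul_sum]
    _ = (M / ((m*k:ℕ):ℝ)) * ∑ i : Fin (m*k), |w (finProdFinEquiv.symm i).1 - Xs i| := by
        congr 1
        rw [← Equiv.sum_comp (finProdFinEquiv : Fin m × Fin k ≃ Fin (m*k))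
          (fun i => |w (finProdFinEquiv.symm i).1 - Xs i|)]
        exact Finset.sum_congr rfl (fun p _ => by rw [Equiv.symm_apply_apply])
    _ ≤ (M / ((m*k:ℕ):ℝ)) * ((((m*k:ℕ):ℝ) - m) * (xmax - xmin)) :=
        mul_le_mul_of_nonneg_left hl1 (by positivity)
    _ = (((m*k:ℕ):ℝ) - m) / ((m*k:ℕ):ℝ) * M * (xmax - xmin) := by ring

end Stmt9Aux

open Finset Stmt9Aux

/-- For a sample of `m` points drawn uniformly without replacement from
`x₁, ..., xₙ` (the expectation is the average over all injections `Fin m ↪ Fin n`),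
`|E[𝕃ₛ[F_{n,m}]] − 𝕃ₛ[Fₙ]| ≤ ((n−m)/n) ‖s − u‖_∞ (x₍ₙ₎ − x₍₁₎)` for a bounded probability
density `s` on `(0,1)`, where `u ≡ 1` is the uniform density. -/
theorem stmt9 {n m : ℕ} [NeZero n] [NeZero m] (hdvd : m ∣ n) (hle : m ≤ n)
    (x : Fin n → ℝ)
    (s : ℝ → ℝ)
    (hs_nonneg : ∀ t ∈ Set.Ioo (0 : ℝ) 1, 0 ≤ s t)
    (hs_density : ∫ t in Set.Ioo (0 : ℝ) 1, s t = 1)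
    (hs_bdd : BddAbove ((fun t => |s t|) '' Set.Ioo (0 : ℝ) 1))
    (xmin xmax : ℝ) (hmax : IsGreatest (Set.range x) xmax) (hmin : IsLeast (Set.range x) xmin) :
    |(∑ ι : Fin m ↪ Fin n, Lfun s (empCDF (fun j => x (ι j)))) /
          (Fintype.card (Fin m ↪ Fin n) : ℝ) -
        Lfun s (empCDF x)| ≤
      ((n : ℝ) - m) / n * sSup ((fun t => |s t - 1|) '' Set.Ioo (0 : ℝ) 1) * (xmax - xmin) := by
  classical
  obtain ⟨k, rfl⟩ := hdvd
  have hm : 0 < m := Nat.pos_of_ne_zero (NeZero.ne m)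
  have hn : 0 < m * k := Nat.pos_of_ne_zero (NeZero.ne (m*k))
  have hk : 0 < k := by
    rcases Nat.eq_zero_or_pos k with h | h
    · exfalso; rw [h, Nat.mul_zero] at hn; exact absurd hn (lt_irrefl 0)
    · exact h
  haveI : NeZero k := ⟨hk.ne'⟩
  have hnR : (0:ℝ) < ((m*k:ℕ):ℝ) := by exact_mod_cast hn
  have hmR : (0:ℝ) < ((m:ℕ):ℝ) := by exact_mod_cast hm
  -- integrability of the density
  have hsInt : IntegrableOn s (Set.Ioo (0:ℝ) 1) := by
    by_contra h
    rw [integral_undef h] at hs_density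
    norm_num at hs_density
  have hsIoc : IntegrableOn s (Set.Ioc (0:ℝ) 1) := by
    rw [← Set.Ioo_union_right (by norm_num : (0:ℝ) < 1)]
    refine hsInt.union ?_
    rw [IntegrableOn, Measure.restrict_eq_zero.2 Real.volume_singleton]
    exact integrable_zero_measure
  have hs1Ioc : IntegrableOn (fun t => s t - 1) (Set.Ioc (0:ℝ) 1) :=
    hsIoc.sub (integrableOn_const measure_Ioc_lt_top.ne)
  -- the sup norm
  obtain ⟨b, hb⟩ := hs_bdd
  have hbddM : BddAbove ((fun t => |s t - 1|) '' Set.Ioo (0:ℝ) 1) := by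
    refine ⟨b + 1, ?_⟩
    rintro _ ⟨t, ht, rfl⟩
    have h1 : |s t| ≤ b := hb (Set.mem_image_of_mem _ ht)
    have h2 : |s t - 1| ≤ |s t| + |(1:ℝ)| := by
      rw [sub_eq_add_neg]
      exact (abs_add_le _ _).trans (by rw [abs_neg])
    simp only [abs_one] at h2
    linarith
  set M := sSup ((fun t => |s t - 1|) '' Set.Ioo (0:ℝ) 1) with hMdef
  have hMb : ∀ t ∈ Set.Ioo (0:ℝ) 1, |s t - 1| ≤ M :=
    fun t ht => le_csSup hbddM (Set.mem_image_of_mem _ ht)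
  have hxlo : ∀ i, xmin ≤ x i := fun i => hmin.2 ⟨i, rfl⟩
  have hxhi : ∀ i, x i ≤ xmax := fun i => hmax.2 ⟨i, rfl⟩
  -- abbreviations
  set A : (Fin m ↪ Fin (m*k)) → ℝ := fun ι => ∑ j : Fin m,
    (∫ t in ivl m (j:ℕ), (s t - 1))
      * (((fun j => x (ι j)) ∘ Tuple.sort (fun j => x (ι j))) j) with hAdef
  set Ax : ℝ := ∑ i : Fin (m*k),
    (∫ t in ivl (m*k) (i:ℕ), (s t - 1)) * ((x ∘ Tuple.sort x) i) with hAxdef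
  have hzdec : ∀ ι : Fin m ↪ Fin (m*k),
      Lfun s (empCDF (fun j => x (ι j))) = A ι + (∑ j, x (ι j)) / (m:ℝ) :=
    fun ι => Lfun_decomp hsIoc (fun j => x (ι j))
  have hxdec : Lfun s (empCDF x) = Ax + (∑ i, x i) / ((m*k:ℕ):ℝ) :=
    Lfun_decomp hsIoc x
  have hcardpos : 0 < Fintype.card (Fin m ↪ Fin (m*k)) :=
    Fintype.card_pos_iff.2 ⟨Fin.castLEEmb hle⟩
  have hcardR : (0:ℝ) < ((Fintype.card (Fin m ↪ Fin (m*k)) : ℕ):ℝ) := by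
    exact_mod_cast hcardpos
  have hmean := exp_mean (m := m) (n := m*k) x
  have hnum : (∑ ι : Fin m ↪ Fin (m*k), Lfun s (empCDF (fun j => x (ι j)))) /
        ((Fintype.card (Fin m ↪ Fin (m*k)) : ℕ):ℝ) - Lfun s (empCDF x)
      = (∑ ι : Fin m ↪ Fin (m*k), (A ι - Ax)) /
        ((Fintype.card (Fin m ↪ Fin (m*k)) : ℕ):ℝ) := by
    have hcne : ((Fintype.card (Fin m ↪ Fin (m*k)) : ℕ):ℝ) ≠ 0 := ne_of_gt hcardR
    have hmne : ((m:ℕ):ℝ) ≠ 0 := ne_of_gt hmR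
    rw [Finset.sum_congr rfl (fun ι _ => hzdec ι), hxdec, Finset.sum_add_distrib,
      ← Finset.sum_div, hmean, Finset.sum_sub_distrib, Finset.sum_const,
      Finset.card_univ, nsmul_eq_mul]
    rw [show ((Fintype.card (Fin m ↪ Fin (m*k)) : ℕ):ℝ) * (m:ℝ)
          * ((∑ i, x i) / ((m*k:ℕ):ℝ))
        = (((Fintype.card (Fin m ↪ Fin (m*k)) : ℕ):ℝ)
          * ((∑ i, x i) / ((m*k:ℕ):ℝ))) * (m:ℝ) from by ring,
      mul_div_assoc, div_self hmne, mul_one, add_div, sub_div,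
      mul_div_cancel_left₀ _ hcne, mul_div_cancel_left₀ _ hcne]
    ring
  rw [hnum]
  have hbound : ∀ ι : Fin m ↪ Fin (m*k),
      |A ι - Ax| ≤ (((m*k:ℕ):ℝ) - m) / ((m*k:ℕ):ℝ) * M * (xmax - xmin) :=
    fun ι => perSample hs1Ioc hMb x hxlo hxhi ι
  calc |(∑ ι : Fin m ↪ Fin (m*k), (A ι - Ax)) /
        ((Fintype.card (Fin m ↪ Fin (m*k)) : ℕ):ℝ)|
      = |∑ ι : Fin m ↪ Fin (m*k), (A ι - Ax)| /
        ((Fintype.card (Fin m ↪ Fin (m*k)) : ℕ):ℝ) := by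
        rw [abs_div, abs_of_pos hcardR]
    _ ≤ (∑ ι : Fin m ↪ Fin (m*k), |A ι - Ax|) /
        ((Fintype.card (Fin m ↪ Fin (m*k)) : ℕ):ℝ) := by
        gcongr
        exact Finset.abs_sum_le_sum_abs _ _
    _ ≤ (∑ _ι : Fin m ↪ Fin (m*k),
          (((m*k:ℕ):ℝ) - m) / ((m*k:ℕ):ℝ) * M * (xmax - xmin)) /
        ((Fintype.card (Fin m ↪ Fin (m*k)) : ℕ):ℝ) := by
        gcongr with ι _
        exact hbound ι
    _ = (((m*k:ℕ):ℝ) - m) / ((m*k:ℕ):ℝ) * M * (xmax - xmin) := by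
        rw [Finset.sum_const, Finset.card_univ, nsmul_eq_mul]
        exact mul_div_cancel_left₀ _ (ne_of_gt hcardR)
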